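/- For finite random variables X and Y and any function q(y|x) that is a conditional probability distribution (q(·|x) sums to 1 for each x), the mutual information satisfies I(X;Y) ≥ E_{p(x,y)}[ log( q(y|x) / p(y) ) ] (Barber–Agakov variational lower bound). -/

import Mathlib

open Finset

/-- Barber–Agakov variational lower bound. For finite random variables X, Y with
joint pmf p and any conditional distribution q(y|x),
I(X;Y) ≥ E_{p(x,y)}[ log( q(y|x) / p(y) ) ]. -/
theorem barber_agakov {X Y : Type*} [Fintype X] [Fintype Y]
    (p : X → Y → ℝ) (hp : ∀ x y, 0 ≤ p x y) (hp1 : ∑ x : X, ∑ y : Y, p x y = 1)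
    (pX : X → ℝ) (hpX : ∀ x, pX x = ∑ y : Y, p x y)
    (pY : Y → ℝ) (hpY : ∀ y, pY y = ∑ x : X, p x y)
    (q : X → Y → ℝ) (hq0 : ∀ x y, 0 ≤ q x y) (hq1 : ∀ x, ∑ y : Y, q x y = 1)
    (hqpos : ∀ x y, 0 < p x y → 0 < q x y) :
    (∑ x : X, ∑ y : Y, p x y * Real.log (p x y / (pX x * pY y)))
      ≥ ∑ x : X, ∑ y : Y, p x y * Real.log (q x y / pY y) := by
  rw [ge_iff_le, ← sub_nonneg]
  have key : ∀ x y, p x y - pX x * q x y ≤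
      p x y * Real.log (p x y / (pX x * pY y)) - p x y * Real.log (q x y / pY y) := by
    intro x y
    rcases eq_or_lt_of_le (hp x y) with h | h
    · have h0 : p x y = 0 := h.symm
      have hpXnn : 0 ≤ pX x := by
        rw [hpX]; exact Finset.sum_nonneg fun y _ => hp x y
      have : 0 ≤ pX x * q x y := mul_nonneg hpXnn (hq0 x y)
      simp [h0]; linarith
    · have hpXpos : 0 < pX x := by
        rw [hpX]
        exact lt_of_lt_of_le h (Finset.single_le_sum (fun y _ => hp x y) (Finset.mem_univ y))
      have hpYpos : 0 < pY y := by
        rw [hpY]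
        exact lt_of_lt_of_le h (Finset.single_le_sum (fun x _ => hp x y) (Finset.mem_univ x))
      have hqp : 0 < q x y := hqpos x y h
      have hlog : Real.log (p x y / (pX x * pY y)) - Real.log (q x y / pY y)
          = Real.log (p x y / (pX x * q x y)) := by
        rw [Real.log_div h.ne' (by positivity), Real.log_div hqp.ne' hpYpos.ne',
          Real.log_div h.ne' (by positivity), Real.log_mul hpXpos.ne' hpYpos.ne',
          Real.log_mul hpXpos.ne' hqp.ne']
        ring
      rw [← mul_sub, hlog]
      have hratio : 0 < pX x * q x y / p x y := by positivity
      have hle := Real.log_le_sub_one_of_pos hratio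
      have hinv : Real.log (p x y / (pX x * q x y)) = - Real.log (pX x * q x y / p x y) := by
        rw [← Real.log_inv]; congr 1; field_simp
      rw [hinv]
      have h2 : p x y * (pX x * q x y / p x y) = pX x * q x y := by field_simp
      nlinarith [mul_le_mul_of_nonneg_left hle (le_of_lt h)]
  calc (0:ℝ) = (∑ x : X, ∑ y : Y, p x y) - ∑ x : X, ∑ y : Y, pX x * q x y := by
        rw [hp1]
        have : ∀ x, ∑ y : Y, pX x * q x y = pX x := by
          intro x; rw [← Finset.mul_sum, hq1, mul_one]
        rw [Finset.sum_congr rfl fun x _ => this x]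
        have : ∑ x : X, pX x = 1 := by
          rw [Finset.sum_congr rfl fun x _ => hpX x, hp1]
        rw [this]; ring
    _ = ∑ x : X, ∑ y : Y, (p x y - pX x * q x y) := by
        rw [← Finset.sum_sub_distrib]
        exact Finset.sum_congr rfl fun x _ => (Finset.sum_sub_distrib _ _).symm
    _ ≤ ∑ x : X, ∑ y : Y, (p x y * Real.log (p x y / (pX x * pY y)) - p x y * Real.log (q x y / pY y)) :=
        Finset.sum_le_sum fun x _ => Finset.sum_le_sum fun y _ => key x y
    _ = _ := by
        rw [← Finset.sum_sub_distrib]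
        exact Finset.sum_congr rfl fun x _ => Finset.sum_sub_distrib _ _
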